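/- Every finite subgraph of the graph G_{ℝ}(D), whose vertices are the reals and whose edges join pairs of points at distance in D for a set D = {d₁,…,d_k} of reals algebraically independent over ℚ (in particular linearly independent over ℚ), has chromatic number at most that of the k-dimensional rectangular grid graph ℤ^k with edges between points differing by a standard basis vector; in particular χ(G_ℝ(D)) ≤ 2. -/

import Mathlib

/-- The distance graph on ℝ: x ~ y iff |x − y| ∈ D. -/
def distGraph (D : Set ℝ) : SimpleGraph ℝ where
  Adj x y := x ≠ y ∧ |x - y| ∈ D
  symm := by
    constructor
    intro x y h
    exact ⟨h.1.symm, by rw [abs_sub_comm]; exact h.2⟩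
  loopless := by
    constructor
    intro x h
    exact h.1 rfl

/-- The k-dimensional rectangular grid graph on ℤ^k: edges between points
differing by a standard basis vector. -/
def gridGraph (k : ℕ) : SimpleGraph (Fin k → ℤ) where
  Adj u v := ∃ i, |u i - v i| = 1 ∧ ∀ j, j ≠ i → u j = v j
  symm := by
    constructor
    rintro u v ⟨i, hi, hj⟩
    exact ⟨i, by rwa [abs_sub_comm], fun j hji => (hj j hji).symm⟩
  loopless := by
    constructor
    rintro u ⟨i, hi, -⟩
    simp at hi

/-- Transfer colorability along a graph homomorphism. -/
lemma colorable_of_hom {V W : Type*} {G : SimpleGraph V} {G' : SimpleGraph W}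
    (f : G →g G') {n : ℕ} (h : G'.Colorable n) : G.Colorable n := by
  obtain ⟨C⟩ := h
  exact ⟨SimpleGraph.Coloring.mk (C ∘ f) fun hadj => C.valid (f.map_adj hadj)⟩

/-- The grid graph is 2-colorable by parity of the coordinate sum. -/
lemma gridGraph_colorable (k : ℕ) : (gridGraph k).Colorable 2 := by
  have C : (gridGraph k).Coloring (ZMod 2) := by
    refine SimpleGraph.Coloring.mk (fun v => ((∑ i, v i : ℤ) : ZMod 2)) ?_
    rintro u v ⟨i, hi, hj⟩ h
    have hsum : ((∑ j, u j) - (∑ j, v j) : ℤ) = u i - v i := by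
      rw [← Finset.sum_sub_distrib]
      rw [Finset.sum_eq_single i]
      · intro j _ hji
        rw [hj j hji, sub_self]
      · intro hni; exact absurd (Finset.mem_univ i) hni
    have h' : ((∑ j, u j : ℤ) : ZMod 2) = ((∑ j, v j : ℤ) : ZMod 2) := h
    have h2 : (((∑ j, u j) - (∑ j, v j) : ℤ) : ZMod 2) = 0 := by
      rw [Int.cast_sub, h', sub_self]
    rw [hsum] at h2
    rcases abs_eq (by norm_num : (0:ℤ) ≤ 1) |>.mp hi with h1 | h1 <;>
      rw [h1] at h2 <;> simp at h2
  simpa using C.colorable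

theorem stmt19 (k : ℕ) (dv : Fin k → ℝ) (hinj : Function.Injective dv)
    (halg : AlgebraicIndependent ℚ dv) :
    (∀ V : Finset ℝ,
        ((distGraph (Set.range dv)).induce (V : Set ℝ)).chromaticNumber ≤
          (gridGraph k).chromaticNumber) ∧
      (distGraph (Set.range dv)).Colorable 2 := by
  classical
  have hli : LinearIndependent ℚ dv := halg.linearIndependent
  have hs : LinearIndepOn ℚ id (Set.range dv) := (linearIndepOn_id_range_iff hinj).mpr hli
  set B := Module.Basis.extend hs with hB
  have hmem : ∀ i : Fin k, dv i ∈ hs.extend (Set.subset_univ _) :=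
    fun i => hs.subset_extend _ ⟨i, rfl⟩
  set idx : Fin k → hs.extend (Set.subset_univ _) := fun i => ⟨dv i, hmem i⟩ with hidx
  have hidxinj : Function.Injective idx := by
    intro i j h
    apply hinj
    exact congrArg Subtype.val h
  -- the coordinate map
  set φ : ℝ → (Fin k → ℤ) := fun x i => ⌊B.repr x (idx i)⌋ with hφ
  -- φ is a graph homomorphism
  have hhom : ∀ {x y : ℝ}, (distGraph (Set.range dv)).Adj x y → (gridGraph k).Adj (φ x) (φ y) := by
    rintro x y ⟨hxy, i, hdi⟩
    have habs : |x - y| = dv i := hdi.symm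
    have key : ∀ j, B.repr x (idx j) - B.repr y (idx j) =
        (if j = i then (if 0 ≤ x - y then 1 else -1) else 0) := by
      intro j
      have hrepr : B.repr (dv i) = Finsupp.single (idx i) 1 := by
        have : B (idx i) = dv i := Module.Basis.extend_apply_self hs (idx i)
        rw [← this, B.repr_self]
      rcases le_or_gt 0 (x - y) with hle | hlt
      · have hxd : x - y = dv i := by rwa [abs_of_nonneg hle] at habs
        have : B.repr x - B.repr y = Finsupp.single (idx i) 1 := by
          rw [← map_sub, hxd, hrepr]
        have h2 := DFunLike.congr_fun this (idx j)
        rw [Finsupp.sub_apply, Finsupp.single_apply] at h2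
        by_cases hji : j = i
        · subst hji
          rw [if_pos rfl] at h2
          rw [if_pos rfl, if_pos hle]
          linarith
        · rw [if_neg (fun h => hji (hidxinj h).symm)] at h2
          rw [if_neg hji]
          linarith
      · have hxd : y - x = dv i := by
          rw [abs_of_neg (by linarith)] at habs; linarith
        have : B.repr y - B.repr x = Finsupp.single (idx i) 1 := by
          rw [← map_sub, hxd, hrepr]
        have h2 := DFunLike.congr_fun this (idx j)
        rw [Finsupp.sub_apply, Finsupp.single_apply] at h2
        by_cases hji : j = i
        · subst hji
          rw [if_pos rfl] at h2
          rw [if_pos rfl, if_neg (by linarith : ¬ (0:ℝ) ≤ x - y)]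
          linarith
        · rw [if_neg (fun h => hji (hidxinj h).symm)] at h2
          rw [if_neg hji]
          linarith
      
    refine ⟨i, ?_, ?_⟩
    · have hk := key i
      rw [if_pos rfl] at hk
      rcases le_or_gt 0 (x - y) with hle | hlt
      · rw [if_pos hle] at hk
        have : B.repr x (idx i) = B.repr y (idx i) + 1 := by linarith
        simp only [hφ]
        rw [this, Int.floor_add_one]
        simp
      · rw [if_neg (by linarith)] at hk
        have : B.repr y (idx i) = B.repr x (idx i) + 1 := by linarith
        simp only [hφ]
        rw [this, Int.floor_add_one]
        rw [abs_sub_comm]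
        simp
    · intro j hji
      have hk := key j
      rw [if_neg hji] at hk
      have : B.repr x (idx j) = B.repr y (idx j) := by linarith
      simp only [hφ, this]
  have φhom : distGraph (Set.range dv) →g gridGraph k :=
    ⟨φ, fun h => hhom h⟩
  have hcol2 : (distGraph (Set.range dv)).Colorable 2 :=
    colorable_of_hom φhom (gridGraph_colorable k)
  refine ⟨fun V => ?_, hcol2⟩
  apply SimpleGraph.chromaticNumber_le_of_forall_imp
  intro n hn
  -- hom from induced graph to grid graph
  have ι : ((distGraph (Set.range dv)).induce (V : Set ℝ)) →g distGraph (Set.range dv) :=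
    ⟨Subtype.val, fun h => h⟩
  exact colorable_of_hom (φhom.comp ι) hn
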